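/- Let X be a normal variety over an algebraically closed field, E_1,…,E_l distinct prime divisors on X, and D a ℚ-Weil divisor. If the set V = {x ∈ ℝ^l : Σ x_i E_i ∼_ℝ D} is nonempty, then V is an affine subspace of ℝ^l defined over ℚ (i.e., V = x' + V_0 with x' ∈ ℚ^l and V_0 a linear subspace spanned by rational vectors). -/

import Mathlib

/-!
STATEMENT 4: Let `X` be a normal variety, `E_1, …, E_l` distinct prime divisors and `D` a
ℚ-Weil divisor.  If `V = {x ∈ ℝ^l : Σ x_i E_i ∼_ℝ D}` is nonempty, then `V` is an affine
subspace of `ℝ^l` defined over `ℚ`: `V = x' + V₀` with `x' ∈ ℚ^l` and `V₀` a linear subspace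
spanned by rational vectors.

We formalize Weil divisors as finitely supported functions on the set `P` of primes of `X`.
Principal divisors `(f)` for `f ∈ k(X)^×` have integer coefficients and form a subgroup
`S ≤ (P →₀ ℤ)`; the relation `B ∼_ℝ D` means `B - D ∈ span_ℝ(S)` inside `P →₀ ℝ`
(`B - D = Σ r_α (f_α)` with `r_α ∈ ℝ`).  This is exactly the level of generality at which
the lemma is proved: the only input is integrality of principal divisors.
-/

open Finsupp

/-- The image in `P →₀ ℝ` of an integral divisor. -/
noncomputable def intDiv {P : Type} (s : P →₀ ℤ) : P →₀ ℝ :=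
  s.mapRange (Int.cast : ℤ → ℝ) (by simp)

/-- The image in `P →₀ ℝ` of a rational divisor. -/
noncomputable def ratDiv {P : Type} (s : P →₀ ℚ) : P →₀ ℝ :=
  s.mapRange (Rat.cast : ℚ → ℝ) (by simp)

/-- Coordinatewise application of a `ℚ`-linear functional on `ℝ`, recast into `ℝ`. -/
noncomputable def psiHom {P : Type} (π : ℝ →ₗ[ℚ] ℚ) : (P →₀ ℝ) →+ (P →₀ ℝ) :=
  Finsupp.mapRange.addMonoidHom ((Rat.castHom ℝ).toAddMonoidHom.comp π.toAddMonoidHom)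

lemma psiHom_apply {P : Type} (π : ℝ →ₗ[ℚ] ℚ) (s : P →₀ ℝ) (p : P) :
    psiHom π s p = ((π (s p) : ℚ) : ℝ) := by
  simp [psiHom, Finsupp.mapRange.addMonoidHom, Finsupp.mapRange_apply]
  rfl

lemma psiHom_smul_intDiv {P : Type} (π : ℝ →ₗ[ℚ] ℚ) (c : ℝ) (s : P →₀ ℤ) :
    psiHom π (c • intDiv s) = ((π c : ℚ) : ℝ) • intDiv s := by
  ext p
  rw [psiHom_apply]
  have h1 : (c • intDiv s) p = c * ((s p : ℤ) : ℝ) := by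
    simp [intDiv, Finsupp.mapRange_apply]
  have h2 : c * ((s p : ℤ) : ℝ) = ((s p : ℤ) : ℚ) • c := by
    rw [Rat.smul_def]; push_cast; ring
  rw [h1, h2, map_smul]
  simp [intDiv, Finsupp.mapRange_apply, Rat.smul_def]
  ring

lemma psiHom_mem_span {P : Type} (π : ℝ →ₗ[ℚ] ℚ) (A : Set (P →₀ ℤ)) {m : P →₀ ℝ}
    (hm : m ∈ Submodule.span ℝ (intDiv '' A)) :
    psiHom π m ∈ Submodule.span ℝ (intDiv '' A) := by
  obtain ⟨n, f, g, rfl⟩ := Submodule.mem_span_set'.mp hm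
  rw [map_sum]
  refine Submodule.sum_mem _ fun i _ => ?_
  obtain ⟨s, hs, hgs⟩ := (g i).2
  rw [← hgs, psiHom_smul_intDiv]
  exact Submodule.smul_mem _ _ (Submodule.subset_span ⟨s, hs, rfl⟩)

lemma psiHom_single {P : Type} (π : ℝ →ₗ[ℚ] ℚ) (p : P) (r : ℝ) :
    psiHom π (Finsupp.single p r) = Finsupp.single p ((π r : ℚ) : ℝ) := by
  ext q
  rw [psiHom_apply]
  rcases eq_or_ne q p with rfl | h
  · simp
  · simp [Finsupp.single_apply, Ne.symm h]

lemma psiHom_ratDiv {P : Type} (π : ℝ →ₗ[ℚ] ℚ) (hπ : ∀ q : ℚ, π (q : ℝ) = q) (D : P →₀ ℚ) :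
    psiHom π (ratDiv D) = ratDiv D := by
  ext p
  rw [psiHom_apply]
  simp [ratDiv, Finsupp.mapRange_apply, hπ]

theorem rlinear_equivalence_locus_is_rational_affine_subspace
    {P : Type}                      -- the set of prime divisors of the normal variety `X`
    (S : AddSubgroup (P →₀ ℤ))      -- the subgroup of principal (Weil) divisors `(f)`, `f ∈ k(X)^×`
    {l : ℕ} (E : Fin l → P) (hE : Function.Injective E)   -- distinct primes `E_1, …, E_l`
    (D : P →₀ ℚ)                    -- a ℚ-Weil divisor
    (V : Set (Fin l → ℝ))
    (hV : V = {x | (∑ i, Finsupp.single (E i) (x i)) - ratDiv D ∈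
        Submodule.span ℝ (intDiv '' (S : Set (P →₀ ℤ)))})
    (hne : V.Nonempty) :
    ∃ x' ∈ V, (∀ i, ∃ q : ℚ, x' i = (q : ℝ)) ∧
      ∃ T : Set (Fin l → ℚ),
        V = {x | ∃ v ∈ Submodule.span ℝ ((fun w : Fin l → ℚ => fun i => ((w i : ℝ))) '' T),
          x = x' + v} := by
  classical
  set M := Submodule.span ℝ (intDiv '' (S : Set (P →₀ ℤ))) with hM
  -- the `ℝ`-linear map `x ↦ Σ single (E i) (x i)`
  set φL : (Fin l → ℝ) →ₗ[ℝ] (P →₀ ℝ) :=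
    ∑ i, (Finsupp.lsingle (E i)).comp (LinearMap.proj i) with hφL
  have hφ : ∀ x : Fin l → ℝ, φL x = ∑ i, Finsupp.single (E i) (x i) := by
    intro x; simp [hφL, LinearMap.sum_apply]
  have key : ∀ (π : ℝ →ₗ[ℚ] ℚ) (x : Fin l → ℝ),
      psiHom π (∑ i, Finsupp.single (E i) (x i)) =
        ∑ i, Finsupp.single (E i) ((π (x i) : ℚ) : ℝ) := by
    intro π x
    rw [map_sum]
    exact Finset.sum_congr rfl fun i _ => psiHom_single π (E i) (x i)
  obtain ⟨x₀, hx₀⟩ := hne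
  obtain ⟨π₀, hπ₀⟩ := (Algebra.linearMap ℚ ℝ).exists_leftInverse_of_injective
      (LinearMap.ker_eq_bot.mpr fun a b h => by
        simpa using Rat.cast_injective (α := ℝ) (by simpa using h))
  have hπ₀' : ∀ q : ℚ, π₀ (q : ℝ) = q := by
    intro q
    have := LinearMap.congr_fun hπ₀ q
    simpa using this
  set x' : Fin l → ℝ := fun i => ((π₀ (x₀ i) : ℚ) : ℝ) with hx'
  have hx₀M : (∑ i, Finsupp.single (E i) (x₀ i)) - ratDiv D ∈ M := by
    rw [hV] at hx₀; exact hx₀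
  have hx'M : (∑ i, Finsupp.single (E i) (x' i)) - ratDiv D ∈ M := by
    have h := psiHom_mem_span π₀ _ hx₀M
    rwa [map_sub, key, psiHom_ratDiv π₀ hπ₀'] at h
  have hx'V : x' ∈ V := by rw [hV]; exact hx'M
  refine ⟨x', hx'V, fun i => ⟨π₀ (x₀ i), rfl⟩, ?_⟩
  refine ⟨{w : Fin l → ℚ | (∑ i, Finsupp.single (E i) ((w i : ℝ))) ∈ M}, ?_⟩
  have sub_mem : ∀ {x : Fin l → ℝ}, x ∈ V →
      (∑ i, Finsupp.single (E i) ((x - x') i)) ∈ M := by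
    intro x hx
    rw [hV] at hx
    have heq : (∑ i, Finsupp.single (E i) ((x - x') i)) =
        ((∑ i, Finsupp.single (E i) (x i)) - ratDiv D) -
          ((∑ i, Finsupp.single (E i) (x' i)) - ratDiv D) := by
      rw [sub_sub_sub_cancel_right, ← Finset.sum_sub_distrib]
      exact Finset.sum_congr rfl fun i _ => by
        rw [Pi.sub_apply, Finsupp.single_sub]
    rw [heq]
    exact Submodule.sub_mem _ hx hx'M
  ext x
  constructor
  · intro hx
    set v : Fin l → ℝ := x - x' with hv
    have hvM := sub_mem hx
    set B := Module.Basis.ofVectorSpace ℚ ℝ with hB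
    set F : Finset _ := Finset.univ.biUnion (fun i : Fin l => (B.repr (v i)).support) with hF
    have hsub : ∀ i, (B.repr (v i)).support ⊆ F := fun i b hb =>
      Finset.mem_biUnion.mpr ⟨i, Finset.mem_univ i, hb⟩
    have hrep : ∀ i, v i = ∑ b ∈ F, ((B.repr (v i)) b : ℝ) * B b := by
      intro i
      conv_lhs => rw [← B.linearCombination_repr (v i)]
      rw [Finsupp.linearCombination_apply,
        Finsupp.sum_of_support_subset _ (hsub i) _ (by simp)]
      exact Finset.sum_congr rfl fun b _ => by rw [Rat.smul_def]
    have hvsum : v = ∑ b ∈ F,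
        (B b : ℝ) • ((fun w : Fin l → ℚ => fun i => ((w i : ℝ)))
          (fun i => B.repr (v i) b)) := by
      funext i
      rw [Finset.sum_apply]
      rw [hrep i]
      exact Finset.sum_congr rfl fun b _ => by
        simp [smul_eq_mul, mul_comm]
    refine ⟨v, ?_, by rw [hv]; abel⟩
    rw [hvsum]
    refine Submodule.sum_mem _ fun b _ =>
      Submodule.smul_mem _ _ (Submodule.subset_span ⟨fun i => B.repr (v i) b, ?_, rfl⟩)
    have h := psiHom_mem_span (B.coord b) _ hvM
    rw [key] at h
    simp only [Module.Basis.coord_apply] at h; exact h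
  · rintro ⟨v, hvmem, rfl⟩
    rw [hV]
    simp only [Set.mem_setOf_eq]
    have hφv : φL v ∈ M := by
      have hle : Submodule.span ℝ
          ((fun w : Fin l → ℚ => fun i => ((w i : ℝ))) ''
            {w : Fin l → ℚ | (∑ i, Finsupp.single (E i) ((w i : ℝ))) ∈ M}) ≤
          M.comap φL := by
        rw [Submodule.span_le]
        rintro _ ⟨w, hw, rfl⟩
        simp only [SetLike.mem_coe, Submodule.mem_comap, hφ]
        exact hw
      exact hle hvmem
    rw [hφ] at hφv
    have heq : (∑ i, Finsupp.single (E i) ((x' + v) i)) - ratDiv D =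
        ((∑ i, Finsupp.single (E i) (x' i)) - ratDiv D) +
          (∑ i, Finsupp.single (E i) (v i)) := by
      have : (∑ i, Finsupp.single (E i) ((x' + v) i)) =
          (∑ i, Finsupp.single (E i) (x' i)) + (∑ i, Finsupp.single (E i) (v i)) := by
        rw [← Finset.sum_add_distrib]
        exact Finset.sum_congr rfl fun i _ => by
          rw [Pi.add_apply, Finsupp.single_add]
      rw [this]; abel
    rw [heq]
    exact Submodule.add_mem _ hx'M hφv
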